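/- Let n ≥ 1 be an integer and let U and U' be independent χ²-random variables, each with n degrees of freedom. Then for every real x > 0 one has Pr[U/(U+U') ≥ (n + 2√(n·x) + 2x)/(2(n + x))] ≤ 2e^{−x} and Pr[U/(U+U') ≤ (n − 2√(n·x))/(2(n + x))] ≤ 2e^{−x}. -/

import Mathlib

open MeasureTheory ProbabilityTheory Real
open scoped NNReal ENNReal

lemma aux_one_sub_le_exp {u : ℝ} (h0 : 0 ≤ u) (h1 : u < 1) :
    1 - u ≤ Real.exp (-u - u ^ 2 / 2) := by
  have hs := Real.hasSum_pow_div_log_of_abs_lt_one (x := u) (by rwa [abs_of_nonneg h0])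
  have h2 : u + u ^ 2 / 2 ≤ -Real.log (1 - u) := by
    have h3 := sum_le_hasSum (Finset.range 2)
      (fun n _ => by positivity) hs
    norm_num [Finset.sum_range_succ] at h3
    linarith
  calc 1 - u = Real.exp (Real.log (1 - u)) := (Real.exp_log (by linarith)).symm
  _ ≤ _ := Real.exp_le_exp.mpr (by linarith)

lemma aux_integral_exp_sq_gaussian {c : ℝ} (hc : c < 1/2) :
    ∫ y, Real.exp (c * y ^ 2) ∂(gaussianReal 0 1) = (Real.sqrt (1 - 2 * c))⁻¹ := by
  have hb : 0 < 1/2 - c := by linarith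
  rw [gaussianReal_of_var_ne_zero 0 one_ne_zero, gaussianPDF_def]
  have hmeq : (fun x : ℝ => ENNReal.ofReal (gaussianPDFReal 0 1 x))
      = fun x : ℝ => ((Real.toNNReal (gaussianPDFReal 0 1 x) : ℝ≥0) : ℝ≥0∞) := rfl
  rw [hmeq, integral_withDensity_eq_integral_smul
    ((measurable_gaussianPDFReal 0 1).real_toNNReal) _]
  have heq : ∀ x : ℝ, (Real.toNNReal (gaussianPDFReal 0 1 x)) • Real.exp (c * x ^ 2)
      = (Real.sqrt (2 * π))⁻¹ * Real.exp (-(1/2 - c) * x ^ 2) := by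
    intro x
    rw [NNReal.smul_def, Real.coe_toNNReal _ (gaussianPDFReal_nonneg 0 1 x)]
    rw [gaussianPDFReal]
    push_cast
    rw [smul_eq_mul, mul_one, mul_assoc, ← Real.exp_add]
    ring_nf
  simp_rw [heq]
  rw [integral_const_mul, integral_gaussian]
  rw [← Real.sqrt_inv, ← Real.sqrt_inv (1 - 2*c), ← Real.sqrt_mul (by positivity)]
  congr 1
  rw [div_eq_mul_inv, ← mul_assoc]
  rw [show (2 * π)⁻¹ * π = 2⁻¹ by field_simp [Real.pi_ne_zero]]
  rw [← mul_inv]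
  congr 1
  ring

lemma aux_integrable_exp_sq_gaussian {c : ℝ} (hc : c < 1/2) :
    Integrable (fun y => Real.exp (c * y ^ 2)) (gaussianReal 0 1) := by
  have hb : 0 < 1/2 - c := by linarith
  rw [gaussianReal_of_var_ne_zero 0 one_ne_zero, gaussianPDF_def]
  rw [integrable_withDensity_iff ((measurable_gaussianPDFReal 0 1).ennreal_ofReal)
    (ae_of_all _ fun x => ENNReal.ofReal_lt_top)]
  have heq : ∀ x : ℝ, Real.exp (c * x ^ 2) * (ENNReal.ofReal (gaussianPDFReal 0 1 x)).toReal
      = (Real.sqrt (2 * π))⁻¹ * Real.exp (-(1/2 - c) * x ^ 2) := by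
    intro x
    rw [ENNReal.toReal_ofReal (gaussianPDFReal_nonneg 0 1 x), gaussianPDFReal]
    push_cast
    rw [mul_one, sub_zero, mul_comm, mul_assoc, ← Real.exp_add]
    ring_nf
  simp_rw [heq]
  exact (integrable_exp_neg_mul_sq hb).const_mul _

lemma aux_iIndepFun_precomp {Ω ι ι' : Type*} [MeasurableSpace Ω] {μ : Measure Ω}
    {f : ι → Ω → ℝ} (hf : iIndepFun f μ)
    {J : ι' → ι} (hJ : Function.Injective J) :
    iIndepFun (fun i => f (J i)) μ := by
  classical
  rw [iIndepFun_iff_measure_inter_preimage_eq_mul] at hf ⊢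
  intro S sets hsets
  have h := hf (S.image J) (sets := Function.extend J sets (fun _ => Set.univ)) ?_
  · rw [Finset.set_biInter_finset_image, Finset.prod_image (fun a _ b _ hab => hJ hab)] at h
    simp_rw [hJ.extend_apply] at h
    exact h
  · intro i hi
    rcases Finset.mem_image.mp hi with ⟨i', hi', rfl⟩
    rw [hJ.extend_apply]
    exact hsets i' hi'

lemma aux_sq_integrable {Ω : Type*} [MeasurableSpace Ω] {μ : Measure Ω} {g : Ω → ℝ}
    (hm : Measurable g) (hg : Measure.map g μ = gaussianReal 0 1) {c : ℝ} (hc : c < 1/2) :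
    Integrable (fun ω => Real.exp (c * g ω ^ 2)) μ := by
  have h := aux_integrable_exp_sq_gaussian hc
  rw [← hg] at h
  exact (integrable_map_measure (Measurable.aestronglyMeasurable (by measurability))
    hm.aemeasurable).mp h

lemma aux_sq_mgf {Ω : Type*} [MeasurableSpace Ω] {μ : Measure Ω} {g : Ω → ℝ}
    (hm : Measurable g) (hg : Measure.map g μ = gaussianReal 0 1) {c : ℝ} (hc : c < 1/2) :
    mgf (fun ω => g ω ^ 2) μ c = (Real.sqrt (1 - 2 * c))⁻¹ := by
  rw [mgf, ← aux_integral_exp_sq_gaussian hc, ← hg,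
    integral_map hm.aemeasurable (Measurable.aestronglyMeasurable (by measurability))]

lemma chiSq_upper {Ω : Type*} [MeasurableSpace Ω] (μ : Measure Ω) [IsProbabilityMeasure μ]
    (n : ℕ) (hn : 1 ≤ n) (f : Fin n → Ω → ℝ) (hmeas : ∀ i, Measurable (f i))
    (hgauss : ∀ i, Measure.map (f i) μ = gaussianReal 0 1)
    (hindep : iIndepFun f μ)
    (x : ℝ) (hx : 0 < x) :
    μ {ω | (n:ℝ) + 2 * Real.sqrt ((n:ℝ) * x) + 2 * x ≤ ∑ i, (f i ω) ^ 2}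
      ≤ ENNReal.ofReal (Real.exp (-x)) := by
  have hnpos : (0:ℝ) < n := by exact_mod_cast hn
  set t := Real.sqrt (x / n) with hts
  have ht : 0 < t := Real.sqrt_pos.mpr (by positivity)
  have ht2 : t ^ 2 = x / n := Real.sq_sqrt (by positivity)
  have hxnt : x = n * t ^ 2 := by rw [ht2]; field_simp
  have hsq : Real.sqrt ((n:ℝ) * x) = n * t := by
    rw [show (n:ℝ) * x = (n:ℝ) ^ 2 * (x / n) by field_simp,
      Real.sqrt_mul (sq_nonneg _), Real.sqrt_sq hnpos.le]
  set A := 1 + 2*t + 2*t^2 with hA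
  have hApos : (0:ℝ) < A := by positivity
  set lam := (t + t^2) / A with hlams
  have hlam : 0 < lam := by positivity
  have h1lam : 1 - 2*lam = A⁻¹ := by rw [hlams]; field_simp; ring
  have hlamhalf : lam < 1/2 := by nlinarith [inv_pos.mpr hApos]
  have hY : iIndepFun (fun i => (fun y : ℝ => y ^ 2) ∘ f i) μ :=
    hindep.comp _ (fun i => measurable_id.pow_const 2)
  have hYmeas : ∀ i, Measurable ((fun y : ℝ => y ^ 2) ∘ f i) := fun i => (hmeas i).pow_const 2
  have hInt : Integrable (fun ω => Real.exp (lam * (∑ i, (fun y : ℝ => y^2) ∘ f i) ω)) μ :=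
    hY.integrable_exp_mul_sum hYmeas
      (fun i _ => aux_sq_integrable (hmeas i) (hgauss i) hlamhalf)
  have hch := measure_ge_le_exp_mul_mgf (μ := μ) (X := ∑ i, (fun y : ℝ => y^2) ∘ f i)
      ((n:ℝ) + 2 * Real.sqrt ((n:ℝ) * x) + 2 * x) hlam.le hInt
  have hmgf : mgf (∑ i, (fun y : ℝ => y^2) ∘ f i) μ lam = ((Real.sqrt (1 - 2*lam))⁻¹) ^ n := by
    rw [hY.mgf_sum hYmeas]
    have : ∀ i ∈ Finset.univ, mgf ((fun y : ℝ => y^2) ∘ f i) μ lam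
        = (Real.sqrt (1 - 2*lam))⁻¹ := fun i _ => aux_sq_mgf (hmeas i) (hgauss i) hlamhalf
    rw [Finset.prod_congr rfl this]
    simp
  have hset : {ω | (n:ℝ) + 2 * Real.sqrt ((n:ℝ) * x) + 2 * x ≤ ∑ i, (f i ω) ^ 2}
      = {ω | (n:ℝ) + 2 * Real.sqrt ((n:ℝ) * x) + 2 * x ≤ (∑ i, (fun y : ℝ => y^2) ∘ f i) ω} := by
    ext ω; simp [Finset.sum_apply]
  rw [hset, ← ENNReal.ofReal_toReal (measure_ne_top μ _)]
  apply ENNReal.ofReal_le_ofReal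
  refine hch.trans ?_
  rw [hmgf, h1lam, Real.sqrt_inv, inv_inv]
  have hε : (n:ℝ) + 2 * Real.sqrt ((n:ℝ) * x) + 2 * x = n * A := by rw [hsq, hxnt]; ring
  have hsA : Real.sqrt A ≤ Real.exp t := by
    rw [show Real.exp t = Real.sqrt ((Real.exp t) ^ 2) from (Real.sqrt_sq (Real.exp_pos t).le).symm]
    apply Real.sqrt_le_sqrt
    have hq := Real.quadratic_le_exp_of_nonneg (by positivity : (0:ℝ) ≤ 2*t)
    have : Real.exp t ^ 2 = Real.exp (2*t) := by
      rw [sq, ← Real.exp_add]; ring_nf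
    rw [this]
    nlinarith [hq]
  calc Real.exp (-lam * ((n:ℝ) + 2 * Real.sqrt ((n:ℝ) * x) + 2 * x)) * (Real.sqrt A) ^ n
      ≤ Real.exp (-lam * ((n:ℝ) + 2 * Real.sqrt ((n:ℝ) * x) + 2 * x)) * (Real.exp t) ^ n := by
        gcongr
    _ = Real.exp (-lam * ((n:ℝ) + 2 * Real.sqrt ((n:ℝ) * x) + 2 * x) + n * t) := by
        rw [Real.exp_add, Real.exp_nat_mul]
    _ = Real.exp (-x) := by
        congr 1
        rw [hε, hlams, hxnt]
        field_simp
        ring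

lemma chiSq_lower {Ω : Type*} [MeasurableSpace Ω] (μ : Measure Ω) [IsProbabilityMeasure μ]
    (n : ℕ) (hn : 1 ≤ n) (f : Fin n → Ω → ℝ) (hmeas : ∀ i, Measurable (f i))
    (hgauss : ∀ i, Measure.map (f i) μ = gaussianReal 0 1)
    (hindep : iIndepFun f μ)
    (x : ℝ) (hx : 0 < x) :
    μ {ω | ∑ i, (f i ω) ^ 2 ≤ (n:ℝ) - 2 * Real.sqrt ((n:ℝ) * x)}
      ≤ ENNReal.ofReal (Real.exp (-x)) := by
  have hnpos : (0:ℝ) < n := by exact_mod_cast hn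
  set t := Real.sqrt (x / n) with hts
  have ht : 0 < t := Real.sqrt_pos.mpr (by positivity)
  have ht2 : t ^ 2 = x / n := Real.sq_sqrt (by positivity)
  have hxnt : x = n * t ^ 2 := by rw [ht2]; field_simp
  have hsq : Real.sqrt ((n:ℝ) * x) = n * t := by
    rw [show (n:ℝ) * x = (n:ℝ) ^ 2 * (x / n) by field_simp,
      Real.sqrt_mul (sq_nonneg _), Real.sqrt_sq hnpos.le]
  by_cases hthalf : t < 1/2
  case neg =>
    -- threshold ≤ 0, event forces f i₀ = 0, which has probability zero
    push_neg at hthalf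
    have i₀ : Fin n := ⟨0, hn⟩
    have hsub : {ω | ∑ i, (f i ω) ^ 2 ≤ (n:ℝ) - 2 * Real.sqrt ((n:ℝ) * x)}
        ⊆ f i₀ ⁻¹' {0} := by
      intro ω hω
      simp only [Set.mem_setOf_eq] at hω
      have hth : (n:ℝ) - 2 * Real.sqrt ((n:ℝ) * x) ≤ 0 := by
        rw [hsq]; nlinarith
      have hterm : (f i₀ ω) ^ 2 ≤ ∑ i, (f i ω) ^ 2 :=
        Finset.single_le_sum (fun i _ => sq_nonneg (f i ω)) (Finset.mem_univ i₀)
      have : (f i₀ ω) ^ 2 = 0 := le_antisymm (by linarith) (sq_nonneg _)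
      simpa using pow_eq_zero_iff (n := 2) (by norm_num) |>.mp this
    refine le_trans (measure_mono hsub) ?_
    have : μ (f i₀ ⁻¹' {0}) = Measure.map (f i₀) μ {0} :=
      (Measure.map_apply (hmeas i₀) (measurableSet_singleton 0)).symm
    rw [this, hgauss i₀,
      gaussianReal_absolutelyContinuous 0 one_ne_zero (volume_singleton)]
    exact zero_le
  case pos =>
    have h12t : 0 < 1 - 2*t := by linarith
    set θ := -(t / (1 - 2*t)) with hθs
    have hθ : θ ≤ 0 := by
      rw [hθs, neg_nonpos]
      positivity
    have hθhalf : θ < 1/2 := lt_of_le_of_lt hθ (by norm_num)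
    have h1θ : 1 - 2*θ = (1 - 2*t)⁻¹ := by
      rw [hθs]; field_simp; ring
    have hY : iIndepFun (fun i => (fun y : ℝ => y ^ 2) ∘ f i) μ :=
      hindep.comp _ (fun i => measurable_id.pow_const 2)
    have hYmeas : ∀ i, Measurable ((fun y : ℝ => y ^ 2) ∘ f i) := fun i => (hmeas i).pow_const 2
    have hInt : Integrable (fun ω => Real.exp (θ * (∑ i, (fun y : ℝ => y^2) ∘ f i) ω)) μ :=
      hY.integrable_exp_mul_sum hYmeas
        (fun i _ => aux_sq_integrable (hmeas i) (hgauss i) hθhalf)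
    have hch := measure_le_le_exp_mul_mgf (μ := μ) (X := ∑ i, (fun y : ℝ => y^2) ∘ f i)
        ((n:ℝ) - 2 * Real.sqrt ((n:ℝ) * x)) hθ hInt
    have hmgf : mgf (∑ i, (fun y : ℝ => y^2) ∘ f i) μ θ = ((Real.sqrt (1 - 2*θ))⁻¹) ^ n := by
      rw [hY.mgf_sum hYmeas]
      have : ∀ i ∈ Finset.univ, mgf ((fun y : ℝ => y^2) ∘ f i) μ θ
          = (Real.sqrt (1 - 2*θ))⁻¹ := fun i _ => aux_sq_mgf (hmeas i) (hgauss i) hθhalf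
      rw [Finset.prod_congr rfl this]
      simp
    have hset : {ω | ∑ i, (f i ω) ^ 2 ≤ (n:ℝ) - 2 * Real.sqrt ((n:ℝ) * x)}
        = {ω | (∑ i, (fun y : ℝ => y^2) ∘ f i) ω ≤ (n:ℝ) - 2 * Real.sqrt ((n:ℝ) * x)} := by
      ext ω; simp [Finset.sum_apply]
    rw [hset, ← ENNReal.ofReal_toReal (measure_ne_top μ _)]
    apply ENNReal.ofReal_le_ofReal
    refine hch.trans ?_
    rw [hmgf, h1θ, Real.sqrt_inv, inv_inv]
    have hsB : Real.sqrt (1 - 2*t) ≤ Real.exp (-t - t^2) := by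
      rw [show Real.exp (-t - t^2) = Real.sqrt ((Real.exp (-t - t^2)) ^ 2) from
        (Real.sqrt_sq (Real.exp_pos _).le).symm]
      apply Real.sqrt_le_sqrt
      have h := aux_one_sub_le_exp (u := 2*t) (by positivity) (by linarith)
      have hsq2 : Real.exp (-t - t^2) ^ 2 = Real.exp (-(2*t) - (2*t)^2/2) := by
        rw [sq, ← Real.exp_add]; ring_nf
      rw [hsq2]
      convert h using 2 <;> ring
    calc Real.exp (-θ * ((n:ℝ) - 2 * Real.sqrt ((n:ℝ) * x))) * (Real.sqrt (1 - 2*t)) ^ n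
        ≤ Real.exp (-θ * ((n:ℝ) - 2 * Real.sqrt ((n:ℝ) * x))) * (Real.exp (-t - t^2)) ^ n := by
          gcongr
      _ = Real.exp (-θ * ((n:ℝ) - 2 * Real.sqrt ((n:ℝ) * x)) + n * (-t - t^2)) := by
          rw [Real.exp_add, Real.exp_nat_mul]
      _ = Real.exp (-x) := by
          congr 1
          rw [hsq, hθs, hxnt]
          have h12t' : (1 - 2*t) ≠ 0 := h12t.ne'
          linear_combination (n:ℝ) * div_mul_cancel₀ t h12t'

lemma aux_ratio {u v a b : ℝ} (hu : 0 ≤ u) (hv : 0 ≤ v) (ha : 0 < a) (huv : 0 < u + v)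
    (h1 : u < a) (h2 : b < v) : u * b < a * v := by
  rcases eq_or_lt_of_le hv with h | h
  · have hv0 : v = 0 := h.symm
    have hb : b < 0 := hv0 ▸ h2
    have hupos : 0 < u := by nlinarith
    nlinarith
  · calc u * b ≤ u * v := mul_le_mul_of_nonneg_left h2.le hu
      _ < a * v := mul_lt_mul_of_pos_right h1 h

/-- **Tail bounds for the ratio `U/(U+U')` of two independent χ² variables with `n`
degrees of freedom.** Here the `2n` underlying standard Gaussians are jointly independent;
`U` is the sum of squares of the first `n` of them and `U'` of the last `n`.  For every
`x > 0`, `Pr[U/(U+U') ≥ (n + 2√(nx) + 2x)/(2(n+x))] ≤ 2 e^{-x}` and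
`Pr[U/(U+U') ≤ (n - 2√(nx))/(2(n+x))] ≤ 2 e^{-x}`. -/
theorem chiSq_ratio_tail
    {Ω : Type*} [MeasurableSpace Ω] (μ : Measure Ω) [IsProbabilityMeasure μ]
    (n : ℕ) (hn : 1 ≤ n) (G : Fin (n + n) → Ω → ℝ)
    (hmeas : ∀ i, Measurable (G i))
    (hgauss : ∀ i, Measure.map (G i) μ = gaussianReal 0 1)
    (hindep : iIndepFun G μ)
    (U U' : Ω → ℝ)
    (hU : ∀ ω, U ω = ∑ i : Fin n, (G (Fin.castAdd n i) ω) ^ 2)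
    (hU' : ∀ ω, U' ω = ∑ i : Fin n, (G (Fin.natAdd n i) ω) ^ 2)
    (x : ℝ) (hx : 0 < x) :
    μ {ω | ((n : ℝ) + 2 * Real.sqrt (n * x) + 2 * x) / (2 * ((n : ℝ) + x))
          ≤ U ω / (U ω + U' ω)} ≤ ENNReal.ofReal (2 * Real.exp (-x)) ∧
    μ {ω | U ω / (U ω + U' ω)
          ≤ ((n : ℝ) - 2 * Real.sqrt (n * x)) / (2 * ((n : ℝ) + x))}
        ≤ ENNReal.ofReal (2 * Real.exp (-x)) := by
  have hnpos : (0:ℝ) < n := by exact_mod_cast hn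
  set T : ℝ := (n : ℝ) + 2 * Real.sqrt (n * x) + 2 * x with hT
  set S : ℝ := (n : ℝ) - 2 * Real.sqrt (n * x) with hS
  have hTpos : 0 < T := by
    have := Real.sqrt_nonneg ((n:ℝ) * x); rw [hT]; linarith
  have hTS : T + S = 2 * ((n:ℝ) + x) := by rw [hT, hS]; ring
  have hden : 0 < 2 * ((n:ℝ) + x) := by positivity
  have hu : ∀ ω, 0 ≤ U ω := fun ω => by rw [hU ω]; positivity
  have hv : ∀ ω, 0 ≤ U' ω := fun ω => by rw [hU' ω]; positivity
  -- tail bounds for U and U'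
  have hind1 : iIndepFun (fun i : Fin n => G (Fin.castAdd n i)) μ :=
    aux_iIndepFun_precomp hindep (Fin.castAdd_injective n n)
  have hinj2 : Function.Injective (Fin.natAdd n : Fin n → Fin (n + n)) := by
    intro a b hab
    have := congrArg Fin.val hab
    simp only [Fin.natAdd] at this
    exact Fin.ext (by omega)
  have hind2 : iIndepFun (fun i : Fin n => G (Fin.natAdd n i)) μ :=
    aux_iIndepFun_precomp hindep hinj2
  have hA1 : μ {ω | T ≤ U ω} ≤ ENNReal.ofReal (Real.exp (-x)) := by
    have : {ω | T ≤ U ω} = {ω | T ≤ ∑ i : Fin n, (G (Fin.castAdd n i) ω) ^ 2} := by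
      ext ω; simp [hU ω]
    rw [this]
    exact chiSq_upper μ n hn _ (fun i => hmeas _) (fun i => hgauss _) hind1 x hx
  have hA2 : μ {ω | U ω ≤ S} ≤ ENNReal.ofReal (Real.exp (-x)) := by
    have : {ω | U ω ≤ S} = {ω | ∑ i : Fin n, (G (Fin.castAdd n i) ω) ^ 2 ≤ S} := by
      ext ω; simp [hU ω]
    rw [this]
    exact chiSq_lower μ n hn _ (fun i => hmeas _) (fun i => hgauss _) hind1 x hx
  have hB1 : μ {ω | U' ω ≤ S} ≤ ENNReal.ofReal (Real.exp (-x)) := by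
    have : {ω | U' ω ≤ S} = {ω | ∑ i : Fin n, (G (Fin.natAdd n i) ω) ^ 2 ≤ S} := by
      ext ω; simp [hU' ω]
    rw [this]
    exact chiSq_lower μ n hn _ (fun i => hmeas _) (fun i => hgauss _) hind2 x hx
  have hB2 : μ {ω | T ≤ U' ω} ≤ ENNReal.ofReal (Real.exp (-x)) := by
    have : {ω | T ≤ U' ω} = {ω | T ≤ ∑ i : Fin n, (G (Fin.natAdd n i) ω) ^ 2} := by
      ext ω; simp [hU' ω]
    rw [this]
    exact chiSq_upper μ n hn _ (fun i => hmeas _) (fun i => hgauss _) hind2 x hx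
  have hsum : ENNReal.ofReal (Real.exp (-x)) + ENNReal.ofReal (Real.exp (-x))
      = ENNReal.ofReal (2 * Real.exp (-x)) := by
    rw [← ENNReal.ofReal_add (by positivity) (by positivity)]
    ring_nf
  constructor
  · have hsub : {ω | T / (2 * ((n:ℝ) + x)) ≤ U ω / (U ω + U' ω)}
        ⊆ {ω | T ≤ U ω} ∪ {ω | U' ω ≤ S} := by
      intro ω hω
      by_contra hc
      simp only [Set.mem_union, Set.mem_setOf_eq, not_or, not_le] at hc
      obtain ⟨h1, h2⟩ := hc
      simp only [Set.mem_setOf_eq] at hω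
      rcases eq_or_lt_of_le (add_nonneg (hu ω) (hv ω)) with hz | hz
      · rw [← hz, div_zero] at hω
        exact absurd hω (not_le.mpr (div_pos hTpos hden))
      · rw [div_le_div_iff₀ hden hz, ← hTS] at hω
        have hkey : U ω * S < T * U' ω :=
          aux_ratio (hu ω) (hv ω) hTpos hz h1 h2
        nlinarith [hω, hkey]
    calc μ _ ≤ μ ({ω | T ≤ U ω} ∪ {ω | U' ω ≤ S}) := measure_mono hsub
      _ ≤ μ {ω | T ≤ U ω} + μ {ω | U' ω ≤ S} := measure_union_le _ _
      _ ≤ _ := by rw [← hsum]; exact add_le_add hA1 hB1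
  · have hsub : {ω | U ω / (U ω + U' ω) ≤ S / (2 * ((n:ℝ) + x))}
        ⊆ {ω | U ω ≤ S} ∪ {ω | T ≤ U' ω} := by
      intro ω hω
      by_contra hc
      simp only [Set.mem_union, Set.mem_setOf_eq, not_or, not_le] at hc
      obtain ⟨h1, h2⟩ := hc
      simp only [Set.mem_setOf_eq] at hω
      rcases eq_or_lt_of_le (add_nonneg (hu ω) (hv ω)) with hz | hz
      · have hU0 : U ω = 0 := by nlinarith [hu ω, hv ω]
        have hSneg : S < 0 := hU0 ▸ h1
        rw [← hz, div_zero] at hω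
        exact absurd hω (not_le.mpr (div_neg_of_neg_of_pos hSneg hden))
      · rw [div_le_div_iff₀ hz hden, ← hTS] at hω
        have hkey : U' ω * S < T * U ω :=
          aux_ratio (hv ω) (hu ω) hTpos (by rwa [add_comm]) h2 h1
        nlinarith [hω, hkey]
    calc μ _ ≤ μ ({ω | U ω ≤ S} ∪ {ω | T ≤ U' ω}) := measure_mono hsub
      _ ≤ μ {ω | U ω ≤ S} + μ {ω | T ≤ U' ω} := measure_union_le _ _
      _ ≤ _ := by rw [← hsum]; exact add_le_add hA2 hB2
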